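/- Let a be uniformly elliptic with 0 < r < a(x,y) for all x ∈ D, y ∈ I^∞, affinely dependent: a(y) = ā + Σ_j y_j ψ_j with ψ_j ∈ L_∞(D). Then the partial derivatives of the solution map y ↦ u(y) ∈ V = H_0^1(D) satisfy ‖∂_y^s u‖_{L_∞(I^∞, V)} ≤ |s|! b^s · ‖f‖_{V*}/r for all s ∈ F, where b_j = ‖ψ_j‖_{L_∞(D)}/r. -/

import Mathlib

theorem stmt9_sumlem (s t : ℕ →₀ ℕ) (j : ℕ) (hj : j ∈ s.support)
    (ht : t = s - Finsupp.single j 1) :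
    (t.sum fun _ n => n) + 1 = (s.sum fun _ n => n) := by
  classical
  have htk : ∀ k, t k = s k - (if k = j then 1 else 0) := by
    intro k; simp [ht, Finsupp.tsub_apply, Finsupp.single_apply, eq_comm]
  have hsub : t.support ⊆ s.support := by
    intro k hk
    simp only [Finsupp.mem_support_iff] at *
    rw [htk] at hk; omega
  have h1 : ∑ a ∈ t.support, t a = ∑ a ∈ s.support, t a :=
    Finset.sum_subset hsub (fun k _ hk => by simpa [Finsupp.mem_support_iff] using hk)
  have hjs : 1 ≤ s j := by simpa [Finsupp.mem_support_iff, Nat.one_le_iff_ne_zero] using hj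
  have h2 : ∑ k ∈ s.support.erase j, t k = ∑ k ∈ s.support.erase j, s k :=
    Finset.sum_congr rfl fun k hk => by
      rw [htk k, if_neg (Finset.ne_of_mem_erase hk)]; omega
  rw [Finsupp.sum, Finsupp.sum, h1, ← Finset.add_sum_erase _ _ hj, ← Finset.add_sum_erase _ _ hj,
    h2, htk j, if_pos rfl]
  omega

theorem stmt9_prodlem (b : ℕ → ℝ) (s t : ℕ →₀ ℕ) (j : ℕ) (hj : j ∈ s.support)
    (ht : t = s - Finsupp.single j 1) :
    b j * ∏ k ∈ t.support, b k ^ t k = ∏ k ∈ s.support, b k ^ s k := by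
  classical
  have htk : ∀ k, t k = s k - (if k = j then 1 else 0) := by
    intro k; simp [ht, Finsupp.tsub_apply, Finsupp.single_apply, eq_comm]
  have hsub : t.support ⊆ s.support := by
    intro k hk
    simp only [Finsupp.mem_support_iff] at *
    rw [htk] at hk; omega
  have hjs : 1 ≤ s j := by simpa [Finsupp.mem_support_iff, Nat.one_le_iff_ne_zero] using hj
  have h1 : ∏ k ∈ t.support, b k ^ t k = ∏ k ∈ s.support, b k ^ t k :=
    Finset.prod_subset hsub (fun k _ hk => by
      simp only [Finsupp.mem_support_iff, not_not] at hk
      simp [hk])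
  have h2 : ∏ k ∈ s.support.erase j, b k ^ t k = ∏ k ∈ s.support.erase j, b k ^ s k :=
    Finset.prod_congr rfl fun k hk => by
      rw [htk k, if_neg (Finset.ne_of_mem_erase hk), Nat.sub_zero]
  rw [h1, ← Finset.mul_prod_erase _ _ hj, ← Finset.mul_prod_erase _ (fun k => b k ^ s k) hj,
    ← mul_assoc, h2, htk j, if_pos rfl, ← pow_succ']
  congr 2
  omega

theorem stmt9_one_le_sum (s : ℕ →₀ ℕ) (h : s ≠ 0) : 1 ≤ s.sum fun _ n => n := by
  obtain ⟨j, hj⟩ : ∃ j, s j ≠ 0 := by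
    by_contra hc; push_neg at hc
    exact h (Finsupp.ext fun j => hc j)
  have hjsup : j ∈ s.support := Finsupp.mem_support_iff.mpr hj
  calc 1 ≤ s j := Nat.one_le_iff_ne_zero.mpr hj
    _ ≤ ∑ a ∈ s.support, s a := Finset.single_le_sum (fun a _ => Nat.zero_le _) hjsup
    _ = s.sum fun _ n => n := rfl

/-- estimate `‖∂_y^s u‖_{L_∞(I^∞,V)} ≤ |s|! b^s ‖f‖_{V*}/r` for the parametric
derivatives of the solution map of the affine-parametric elliptic problem.  The problem is
encoded through its variational structure: `B y` is the parametric bilinear form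
`(u,v) ↦ ∫_D a(y)∇u·∇v` (coercive with constant `r` by uniform ellipticity `0 < r < a`),
`ψB j` is the form `(u,v) ↦ ∫_D ψ_j ∇u·∇v` (bounded by `‖ψ_j‖_{L_∞} = r b_j`), `U s y`
is `∂_y^s u(y)`, `Cf = ‖f‖_{V*}`, and the derivatives obey the recursion
`B(y)(∂_y^s u, v) = -Σ_{j : s_j ≠ 0} s_j ψB_j(∂_y^{s-e_j} u, v)`. -/
theorem stmt9 {V Y : Type*} [NormedAddCommGroup V] [NormedSpace ℝ V]
    (r Cf : ℝ) (hr : 0 < r) (hCf : 0 ≤ Cf)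
    (b : ℕ → ℝ) (hb : ∀ j, 0 ≤ b j)
    (B : Y → V → V → ℝ) (ψB : ℕ → V → V → ℝ)
    (hcoer : ∀ y : Y, ∀ v : V, r * ‖v‖ ^ 2 ≤ B y v v)
    (hψ : ∀ j : ℕ, ∀ v w : V, |ψB j v w| ≤ r * b j * ‖v‖ * ‖w‖)
    (U : (ℕ →₀ ℕ) → Y → V)
    (hU0 : ∀ y : Y, ‖U 0 y‖ ≤ Cf / r)
    (hrec : ∀ s : ℕ →₀ ℕ, s ≠ 0 → ∀ y : Y, ∀ v : V,
      B y (U s y) v =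
        -∑ j ∈ s.support, (s j : ℝ) * ψB j (U (s - Finsupp.single j 1) y) v) :
    ∀ s : ℕ →₀ ℕ, ∀ y : Y,
      ‖U s y‖ ≤ (Nat.factorial (s.sum fun _ n => n) : ℝ) *
        (∏ j ∈ s.support, b j ^ s j) * (Cf / r) := by
  classical
  have hCfr : 0 ≤ Cf / r := div_nonneg hCf hr.le
  suffices H : ∀ N : ℕ, ∀ s : ℕ →₀ ℕ, (s.sum fun _ k => k) ≤ N → ∀ y : Y,
      ‖U s y‖ ≤ (Nat.factorial (s.sum fun _ n => n) : ℝ) *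
        (∏ j ∈ s.support, b j ^ s j) * (Cf / r) by
    intro s y; exact H _ s le_rfl y
  intro N
  induction N with
  | zero =>
    intro s hs y
    have hs0 : s = 0 := by
      by_contra h
      have := stmt9_one_le_sum s h
      omega
    subst hs0
    simpa using hU0 y
  | succ N ih =>
    intro s hs y
    by_cases h0 : s = 0
    · subst h0
      simpa using hU0 y
    -- step inequality
    have hstep : ‖U s y‖ ≤
        ∑ j ∈ s.support, (s j : ℝ) * b j * ‖U (s - Finsupp.single j 1) y‖ := by
      set S := ∑ j ∈ s.support, (s j : ℝ) * b j * ‖U (s - Finsupp.single j 1) y‖ with hS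
      have hSnn : 0 ≤ S := Finset.sum_nonneg fun j _ =>
        mul_nonneg (mul_nonneg (Nat.cast_nonneg _) (hb j)) (norm_nonneg _)
      rcases eq_or_lt_of_le (norm_nonneg (U s y)) with h | h
      · rw [← h]; exact hSnn
      have key : ‖U s y‖ * (r * ‖U s y‖) ≤ S * (r * ‖U s y‖) := by
        have c1 : r * ‖U s y‖ ^ 2 ≤ B y (U s y) (U s y) := hcoer y _
        have c2 : B y (U s y) (U s y) =
            -∑ j ∈ s.support, (s j : ℝ) * ψB j (U (s - Finsupp.single j 1) y) (U s y) :=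
          hrec s h0 y _
        have c3 : -∑ j ∈ s.support, (s j : ℝ) * ψB j (U (s - Finsupp.single j 1) y) (U s y)
            ≤ ∑ j ∈ s.support,
              (s j : ℝ) * (r * b j * ‖U (s - Finsupp.single j 1) y‖ * ‖U s y‖) := by
          calc -∑ j ∈ s.support, (s j : ℝ) * ψB j (U (s - Finsupp.single j 1) y) (U s y)
              ≤ |∑ j ∈ s.support, (s j : ℝ) * ψB j (U (s - Finsupp.single j 1) y) (U s y)| :=
                neg_le_abs _
            _ ≤ ∑ j ∈ s.support,
                |(s j : ℝ) * ψB j (U (s - Finsupp.single j 1) y) (U s y)| :=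
                Finset.abs_sum_le_sum_abs _ _
            _ ≤ ∑ j ∈ s.support,
                (s j : ℝ) * (r * b j * ‖U (s - Finsupp.single j 1) y‖ * ‖U s y‖) := by
                refine Finset.sum_le_sum fun j _ => ?_
                rw [abs_mul, abs_of_nonneg (Nat.cast_nonneg _)]
                exact mul_le_mul_of_nonneg_left (hψ j _ _) (Nat.cast_nonneg _)
        have c4 : ∑ j ∈ s.support,
            (s j : ℝ) * (r * b j * ‖U (s - Finsupp.single j 1) y‖ * ‖U s y‖)
            = S * (r * ‖U s y‖) := by
          rw [hS, Finset.sum_mul]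
          exact Finset.sum_congr rfl fun j _ => by ring
        have : r * ‖U s y‖ ^ 2 = ‖U s y‖ * (r * ‖U s y‖) := by ring
        linarith [c1, c2 ▸ c1]
      exact le_of_mul_le_mul_right key (by positivity)
    -- bound each term via the induction hypothesis
    set m := s.sum fun _ k => k with hm
    have hm1 : 1 ≤ m := stmt9_one_le_sum s h0
    have hterm : ∀ j ∈ s.support,
        (s j : ℝ) * b j * ‖U (s - Finsupp.single j 1) y‖ ≤
        (s j : ℝ) * ((Nat.factorial (m - 1) : ℝ) *
          (∏ k ∈ s.support, b k ^ s k) * (Cf / r)) := by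
      intro j hj
      set t : ℕ →₀ ℕ := s - Finsupp.single j 1 with htdef
      have hts : (t.sum fun k n => n) + 1 = m := stmt9_sumlem s t j hj htdef
      have hIH := ih t (by omega) y
      have hts' : (t.sum fun k n => n) = m - 1 := by omega
      rw [hts'] at hIH
      calc (s j : ℝ) * b j * ‖U t y‖
          ≤ (s j : ℝ) * b j * ((Nat.factorial (m - 1) : ℝ) *
              (∏ k ∈ t.support, b k ^ t k) * (Cf / r)) := by
            exact mul_le_mul_of_nonneg_left hIH
              (mul_nonneg (Nat.cast_nonneg _) (hb j))
        _ = (s j : ℝ) * ((Nat.factorial (m - 1) : ℝ) *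
              (b j * ∏ k ∈ t.support, b k ^ t k) * (Cf / r)) := by ring
        _ = (s j : ℝ) * ((Nat.factorial (m - 1) : ℝ) *
              (∏ k ∈ s.support, b k ^ s k) * (Cf / r)) := by
            rw [stmt9_prodlem b s t j hj htdef]
    have hsum : ∑ j ∈ s.support, (s j : ℝ) * ((Nat.factorial (m - 1) : ℝ) *
          (∏ k ∈ s.support, b k ^ s k) * (Cf / r))
        = (Nat.factorial m : ℝ) * (∏ k ∈ s.support, b k ^ s k) * (Cf / r) := by
      rw [← Finset.sum_mul]
      have hcast : ∑ j ∈ s.support, (s j : ℝ) = (m : ℝ) := by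
        rw [hm]
        rw [Finsupp.sum]
        push_cast
        rfl
      rw [hcast]
      have : (m : ℝ) * (Nat.factorial (m - 1) : ℝ) = (Nat.factorial m : ℝ) := by
        rw [← Nat.cast_mul, Nat.mul_factorial_pred (by omega)]
      rw [← mul_assoc, ← mul_assoc, this]
    calc ‖U s y‖ ≤ ∑ j ∈ s.support, (s j : ℝ) * b j * ‖U (s - Finsupp.single j 1) y‖ := hstep
      _ ≤ ∑ j ∈ s.support, (s j : ℝ) * ((Nat.factorial (m - 1) : ℝ) *
            (∏ k ∈ s.support, b k ^ s k) * (Cf / r)) := Finset.sum_le_sum hterm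
      _ = (Nat.factorial m : ℝ) * (∏ k ∈ s.support, b k ^ s k) * (Cf / r) := hsum
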